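/- Let G be a graph with n vertices and let a and b be positive integers with b ≤ a ≤ n. Then the number of blocks B of G with |B| = a and |∂(B)| = b is at most min{ n · binom(a − 1, b), binom(n, a) }. -/

import Mathlib

open Finset

universe u

variable {V : Type u} [DecidableEq V] [Fintype V]

/-- The boundary `∂(X)` : vertices of `X` having a neighbour outside `X`. -/
def gbnd (G : SimpleGraph V) [DecidableRel G.Adj] (X : Finset V) : Finset V :=
  X.filter (fun x => ∃ y, G.Adj x y ∧ y ∉ X)

/-- The core `κ(X) = X ∖ ∂(X)`. -/
def gcore (G : SimpleGraph V) [DecidableRel G.Adj] (X : Finset V) : Finset V :=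
  X \ gbnd G X

/-- The closed neighbourhood `N[W]` of a vertex set `W`. -/
def nclosed (G : SimpleGraph V) [DecidableRel G.Adj] (W : Finset V) : Finset V :=
  W ∪ Finset.univ.filter (fun y => ∃ x ∈ W, G.Adj x y)

/-- `B` is a block: `κ(B)` is nonempty, induces a connected subgraph, and
`B = N[κ(B)]`. -/
def IsBlock (G : SimpleGraph V) [DecidableRel G.Adj] (B : Finset V) : Prop :=
  (gcore G B).Nonempty ∧ (G.induce ((gcore G B : Finset V) : Set V)).Connected ∧
    B = nclosed G (gcore G B)

/-- `(B, 𝓑)` is a block derivation of the block `B` : `𝓑` is a set of blocks,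
each contained in `B`, whose cores are pairwise disjoint. -/
def IsBlockDeriv (G : SimpleGraph V) [DecidableRel G.Adj]
    (B : Finset V) (𝓑 : Finset (Finset V)) : Prop :=
  IsBlock G B ∧ (∀ A ∈ 𝓑, IsBlock G A ∧ A ⊆ B) ∧
    ∀ A₁ ∈ 𝓑, ∀ A₂ ∈ 𝓑, A₁ ≠ A₂ → gcore G A₁ ∩ gcore G A₂ = ∅

/-- `K(D) = ⋃_{A ∈ 𝓑} κ(A)`. -/
def KD (G : SimpleGraph V) [DecidableRel G.Adj] (𝓑 : Finset (Finset V)) : Finset V :=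
  𝓑.sup (fun A => gcore G A)

/-- `S(D) = B ∖ K(D)`. -/
def SD (G : SimpleGraph V) [DecidableRel G.Adj] (B : Finset V)
    (𝓑 : Finset (Finset V)) : Finset V :=
  B \ KD G 𝓑

namespace BlkAux

variable {n : ℕ}

/-- Rearranging function: identity off `X ∪ Y`, sends `X` to the bottom of `X ∪ Y`
and `Y` to the top, order-preserving on each part. -/
def sortFun (X Y : Finset (Fin n)) (h : Disjoint X Y) : Fin n → Fin n := fun z =>
  if hz : z ∈ X then
    ((X ∪ Y).orderIsoOfFin rfl
      ⟨((X.orderIsoOfFin rfl).symm ⟨z, hz⟩).val,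
        lt_of_lt_of_le ((X.orderIsoOfFin rfl).symm ⟨z, hz⟩).isLt
          (card_le_card subset_union_left)⟩ : Fin n)
  else if hz' : z ∈ Y then
    ((X ∪ Y).orderIsoOfFin rfl
      ⟨X.card + ((Y.orderIsoOfFin rfl).symm ⟨z, hz'⟩).val, by
        have := ((Y.orderIsoOfFin rfl).symm ⟨z, hz'⟩).isLt
        rw [card_union_of_disjoint h]; omega⟩ : Fin n)
  else z

lemma sortFun_not_mem {X Y : Finset (Fin n)} (h : Disjoint X Y) {z : Fin n}
    (hz : z ∉ X ∪ Y) : sortFun X Y h z = z := by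
  rw [mem_union] at hz
  push_neg at hz
  simp [sortFun, hz.1, hz.2]

lemma sortFun_mem {X Y : Finset (Fin n)} (h : Disjoint X Y) {z : Fin n}
    (hz : z ∈ X ∪ Y) : sortFun X Y h z ∈ X ∪ Y := by
  rw [mem_union] at hz
  unfold sortFun
  rcases Decidable.em (z ∈ X) with hx | hx
  · simp only [hx, dif_pos]
    exact ((X ∪ Y).orderIsoOfFin rfl _).2
  · have hy : z ∈ Y := hz.resolve_left hx
    simp only [hx, hy, dif_neg, not_false_iff, dif_pos]
    exact ((X ∪ Y).orderIsoOfFin rfl _).2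

lemma sortFun_lt {X Y : Finset (Fin n)} (h : Disjoint X Y) {x y : Fin n}
    (hx : x ∈ X) (hy : y ∈ Y) : sortFun X Y h x < sortFun X Y h y := by
  have hynx : y ∉ X := fun hc => (Finset.disjoint_left.mp h hc) hy
  unfold sortFun
  simp only [hx, dif_pos, hynx, dif_neg, not_false_iff, hy]
  rw [Subtype.coe_lt_coe]
  apply ((X ∪ Y).orderIsoOfFin rfl).lt_iff_lt.mpr
  apply Fin.mk_lt_mk.mpr
  have := ((X.orderIsoOfFin rfl).symm ⟨x, hx⟩).isLt
  omega

lemma sortFun_injective {X Y : Finset (Fin n)} (h : Disjoint X Y) :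
    Function.Injective (sortFun X Y h) := by
  intro z₁ z₂ heq
  by_cases h1 : z₁ ∈ X ∪ Y
  · by_cases h2 : z₂ ∈ X ∪ Y
    · -- both in S; analyze branches
      rw [mem_union] at h1 h2
      unfold sortFun at heq
      rcases Decidable.em (z₁ ∈ X) with hx1 | hx1 <;>
        rcases Decidable.em (z₂ ∈ X) with hx2 | hx2
      · simp only [hx1, hx2, dif_pos] at heq
        have hv := ((X ∪ Y).orderIsoOfFin rfl).injective (Subtype.coe_injective heq)
        simp only [Fin.mk.injEq] at hv
        exact congrArg Subtype.val
          ((X.orderIsoOfFin rfl).symm.injective (Fin.ext hv))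
      · have hy2 : z₂ ∈ Y := h2.resolve_left hx2
        simp only [hx1, hx2, hy2, dif_pos, dif_neg, not_false_iff] at heq
        have hv := ((X ∪ Y).orderIsoOfFin rfl).injective (Subtype.coe_injective heq)
        simp only [Fin.mk.injEq] at hv
        have hlt := Fin.isLt ((X.orderIsoOfFin rfl).symm ⟨z₁, hx1⟩)
        omega
      · have hy1 : z₁ ∈ Y := h1.resolve_left hx1
        simp only [hx1, hx2, hy1, dif_pos, dif_neg, not_false_iff] at heq
        have hv := ((X ∪ Y).orderIsoOfFin rfl).injective (Subtype.coe_injective heq)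
        simp only [Fin.mk.injEq] at hv
        have hlt := Fin.isLt ((X.orderIsoOfFin rfl).symm ⟨z₂, hx2⟩)
        omega
      · have hy1 : z₁ ∈ Y := h1.resolve_left hx1
        have hy2 : z₂ ∈ Y := h2.resolve_left hx2
        simp only [hx1, hx2, hy1, hy2, dif_pos, dif_neg, not_false_iff] at heq
        have hv := ((X ∪ Y).orderIsoOfFin rfl).injective (Subtype.coe_injective heq)
        simp only [Fin.mk.injEq] at hv
        have hv' : ((Y.orderIsoOfFin rfl).symm ⟨z₁, hy1⟩ : Fin Y.card).val =
            ((Y.orderIsoOfFin rfl).symm ⟨z₂, hy2⟩ : Fin Y.card).val := by omega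
        exact congrArg Subtype.val
          ((Y.orderIsoOfFin rfl).symm.injective (Fin.ext hv'))
    · exfalso
      rw [sortFun_not_mem h h2] at heq
      exact h2 (heq ▸ sortFun_mem h h1)
  · by_cases h2 : z₂ ∈ X ∪ Y
    · exfalso
      rw [sortFun_not_mem h h1] at heq
      exact h1 (heq.symm ▸ sortFun_mem h h2)
    · rw [sortFun_not_mem h h1, sortFun_not_mem h h2] at heq
      exact heq

/-- `sortFun` as a permutation of `Fin n`. -/
noncomputable def sortPerm (X Y : Finset (Fin n)) (h : Disjoint X Y) : Equiv.Perm (Fin n) :=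
  Equiv.ofBijective (sortFun X Y h)
    ((Finite.injective_iff_bijective).mp (sortFun_injective h))

lemma sortPerm_apply (X Y : Finset (Fin n)) (h : Disjoint X Y) (z : Fin n) :
    sortPerm X Y h z = sortFun X Y h z := rfl

lemma sortPerm_image {X Y : Finset (Fin n)} (h : Disjoint X Y) :
    (X ∪ Y).image (sortPerm X Y h) = X ∪ Y := by
  apply Finset.eq_of_subset_of_card_le
  · intro z hz
    rw [mem_image] at hz
    obtain ⟨w, hw, rfl⟩ := hz
    exact sortFun_mem h hw
  · rw [Finset.card_image_of_injective _ (sortPerm X Y h).injective]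

end BlkAux

namespace BlkAux

lemma sortPerm_congr {n : ℕ} {X₁ X₂ Y₁ Y₂ : Finset (Fin n)} (hX : X₁ = X₂) (hY : Y₁ = Y₂)
    (h₁ : Disjoint X₁ Y₁) (h₂ : Disjoint X₂ Y₂) :
    sortPerm X₁ Y₁ h₁ = sortPerm X₂ Y₂ h₂ := by
  subst hX; subst hY; rfl

/-- Uniform Bollobás set-pair inequality. -/
lemma bollobas {α : Type*} {ι : Type*} [Fintype α] [DecidableEq α] [DecidableEq ι]
    (𝓕 : Finset ι) (A C : ι → Finset α) (p q : ℕ)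
    (hA : ∀ i ∈ 𝓕, (A i).card = p) (hC : ∀ i ∈ 𝓕, (C i).card = q)
    (hd : ∀ i ∈ 𝓕, Disjoint (A i) (C i))
    (hcross : ∀ i ∈ 𝓕, ∀ j ∈ 𝓕, i ≠ j → ((A i) ∩ (C j)).Nonempty) :
    𝓕.card ≤ (p + q).choose p := by
  classical
  set n := Fintype.card α with hn
  have hΩcard : Fintype.card (α ≃ Fin n) = n.factorial :=
    Fintype.card_equiv (Fintype.equivFin α)
  set E : ι → Finset (α ≃ Fin n) := fun i =>
    univ.filter (fun σ => ∀ x ∈ C i, ∀ y ∈ A i, σ x < σ y) with hE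
  have key1 : ∀ i ∈ 𝓕, n.factorial ≤ (p + q).choose p * (E i).card := by
    intro i hi
    have hdisj : ∀ σ : α ≃ Fin n, Disjoint ((C i).image σ) ((A i).image σ) := fun σ =>
      (Finset.disjoint_image σ.injective).mpr (hd i hi).symm
    set Φ : (α ≃ Fin n) → (α ≃ Fin n) := fun σ =>
      σ.trans (sortPerm ((C i).image σ) ((A i).image σ) (hdisj σ)) with hΦ
    have hmaps : ∀ σ, Φ σ ∈ E i := by
      intro σ
      rw [hE]
      simp only [mem_filter, mem_univ, true_and]
      intro x hx y hy
      exact sortFun_lt (hdisj σ) (mem_image_of_mem _ hx) (mem_image_of_mem _ hy)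
    have himg : ∀ σ : α ≃ Fin n, (A i ∪ C i).image (Φ σ) = (A i ∪ C i).image σ := by
      intro σ
      have h1 : (A i ∪ C i).image (Φ σ) =
          ((A i ∪ C i).image σ).image (sortPerm ((C i).image σ) ((A i).image σ) (hdisj σ)) := by
        rw [Finset.image_image]
        rfl
      have h2 : (A i ∪ C i).image σ = (C i).image σ ∪ (A i).image σ := by
        rw [Finset.image_union, union_comm]
      rw [h1, h2, sortPerm_image (hdisj σ)]
    have hfib : ∀ σ' ∈ E i,
        ((univ : Finset (α ≃ Fin n)).filter (fun σ => Φ σ = σ')).card ≤ (p + q).choose p := by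
      intro σ' _
      have hsub : ((univ : Finset (α ≃ Fin n)).filter (fun σ => Φ σ = σ')).card ≤
          (Finset.powersetCard p ((A i ∪ C i).image σ')).card := by
        refine Finset.card_le_card_of_injOn (fun σ => (A i).image σ) ?_ ?_
        · intro σ hσ
          rw [mem_coe, mem_filter] at hσ
          rw [mem_coe, Finset.mem_powersetCard]
          constructor
          · calc (A i).image σ ⊆ (A i ∪ C i).image σ :=
                  Finset.image_subset_image subset_union_left
              _ = (A i ∪ C i).image (Φ σ) := (himg σ).symm
              _ = (A i ∪ C i).image σ' := by rw [hσ.2]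
          · rw [Finset.card_image_of_injective _ σ.injective, hA i hi]
        · intro σ₁ hσ₁ σ₂ hσ₂ hAeq
          simp only [coe_filter, Set.mem_setOf_eq, mem_univ, true_and] at hσ₁ hσ₂
          dsimp only at hσ₁ hσ₂ hAeq
          have hU : (A i ∪ C i).image σ₁ = (A i ∪ C i).image σ₂ := by
            rw [← himg σ₁, ← himg σ₂, hσ₁, hσ₂]
          have hCeq : (C i).image σ₁ = (C i).image σ₂ := by
            have hCs : ∀ σ : α ≃ Fin n, (C i).image σ =
                ((A i ∪ C i).image σ) \ ((A i).image σ) := by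
              intro σ
              rw [← Finset.image_sdiff _ _ σ.injective,
                Finset.union_sdiff_cancel_left (hd i hi)]
            rw [hCs σ₁, hCs σ₂, hU, hAeq]
          have hperm : sortPerm ((C i).image σ₁) ((A i).image σ₁) (hdisj σ₁) =
              sortPerm ((C i).image σ₂) ((A i).image σ₂) (hdisj σ₂) :=
            sortPerm_congr hCeq hAeq _ _
          have htr : σ₁.trans (sortPerm ((C i).image σ₁) ((A i).image σ₁) (hdisj σ₁)) =
              σ₂.trans (sortPerm ((C i).image σ₁) ((A i).image σ₁) (hdisj σ₁)) :=
            hσ₁.trans (hσ₂.symm.trans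
              (congrArg (fun P => σ₂.trans P) hperm.symm))
          have h2 := congrArg
            (fun e : α ≃ Fin n =>
              e.trans (sortPerm ((C i).image σ₁) ((A i).image σ₁) (hdisj σ₁)).symm) htr
          simpa [Equiv.trans_assoc] using h2
      have hcard : ((A i ∪ C i).image σ').card = p + q := by
        rw [Finset.card_image_of_injective _ σ'.injective,
          Finset.card_union_of_disjoint (hd i hi), hA i hi, hC i hi]
      rw [Finset.card_powersetCard, hcard] at hsub
      exact hsub
    have := Finset.card_le_mul_card_image_of_maps_to
      (f := Φ) (s := univ) (t := E i) (fun σ _ => hmaps σ) ((p + q).choose p) hfib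
    rw [Finset.card_univ, hΩcard] at this
    exact this
  have key2 : ∀ i ∈ 𝓕, ∀ j ∈ 𝓕, i ≠ j → Disjoint (E i) (E j) := by
    intro i hi j hj hij
    rw [Finset.disjoint_left]
    intro σ hσi hσj
    obtain ⟨x, hx⟩ := hcross i hi j hj hij
    obtain ⟨y, hy⟩ := hcross j hj i hi hij.symm
    rw [mem_inter] at hx hy
    rw [hE] at hσi hσj
    simp only [mem_filter, mem_univ, true_and] at hσi hσj
    exact lt_asymm (hσi y hy.2 x hx.1) (hσj x hx.2 y hy.1)
  have hsum : ∑ i ∈ 𝓕, (E i).card ≤ n.factorial := by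
    rw [← Finset.card_biUnion key2]
    calc (𝓕.biUnion E).card ≤ Fintype.card (α ≃ Fin n) := Finset.card_le_univ _
      _ = n.factorial := hΩcard
  have hmain : 𝓕.card * n.factorial ≤ (p + q).choose p * n.factorial := by
    calc 𝓕.card * n.factorial = ∑ _i ∈ 𝓕, n.factorial := by
          rw [Finset.sum_const, smul_eq_mul]
      _ ≤ ∑ i ∈ 𝓕, (p + q).choose p * (E i).card := Finset.sum_le_sum key1
      _ = (p + q).choose p * ∑ i ∈ 𝓕, (E i).card := by rw [Finset.mul_sum]
      _ ≤ (p + q).choose p * n.factorial := Nat.mul_le_mul_left _ hsum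
  exact Nat.le_of_mul_le_mul_right hmain (Nat.factorial_pos n)

end BlkAux


namespace BlkAux

lemma gbnd_subset (G : SimpleGraph V) [DecidableRel G.Adj] (X : Finset V) :
    gbnd G X ⊆ X := filter_subset _ _

lemma gcore_step (G : SimpleGraph V) [DecidableRel G.Adj] {B₁ B₂ : Finset V}
    (hdisj : gbnd G B₁ ∩ gcore G B₂ = ∅) {x y : V} (hx : x ∈ gcore G B₁)
    (hadj : G.Adj x y) (hy : y ∈ gcore G B₂) : y ∈ gcore G B₁ := by
  rw [gcore, mem_sdiff] at hx ⊢
  have hyB₁ : y ∈ B₁ := by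
    by_contra hyn
    exact hx.2 (by rw [gbnd, mem_filter]; exact ⟨hx.1, y, hadj, hyn⟩)
  refine ⟨hyB₁, fun hyb => ?_⟩
  have hmem : y ∈ gbnd G B₁ ∩ gcore G B₂ := mem_inter.mpr ⟨hyb, hy⟩
  rw [hdisj] at hmem
  exact absurd hmem (notMem_empty y)

lemma gcore_subset_gcore (G : SimpleGraph V) [DecidableRel G.Adj] {B₁ B₂ : Finset V}
    (hconn : (G.induce ((gcore G B₂ : Finset V) : Set V)).Connected)
    {v : V} (hv₁ : v ∈ gcore G B₁) (hv₂ : v ∈ gcore G B₂)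
    (hdisj : gbnd G B₁ ∩ gcore G B₂ = ∅) : gcore G B₂ ⊆ gcore G B₁ := by
  intro u hu
  obtain ⟨w⟩ := hconn.preconnected ⟨v, by simpa using hv₂⟩ ⟨u, by simpa using hu⟩
  have main : ∀ {s t : ((gcore G B₂ : Finset V) : Set V)}
      (_ : (G.induce ((gcore G B₂ : Finset V) : Set V)).Walk s t),
      (s : V) ∈ gcore G B₁ → (t : V) ∈ gcore G B₁ := by
    intro s t w
    induction w with
    | nil => exact id
    | @cons s m t ha _wtl ih =>
        intro hs
        exact ih (gcore_step G hdisj hs ha (by simpa using m.2))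
  exact main w hv₁

lemma gcore_card (G : SimpleGraph V) [DecidableRel G.Adj] (B : Finset V) :
    (gcore G B).card = B.card - (gbnd G B).card :=
  card_sdiff_of_subset (gbnd_subset G B)

end BlkAux


/-- The number of blocks `B` of `G` with `|B| = a` and `|∂(B)| = b` is at most
`min (n · binom(a − 1, b)) (binom(n, a))`. -/
theorem blocks_count (G : SimpleGraph V) [DecidableRel G.Adj]
    (a b : ℕ) (ha : 0 < a) (hb : 0 < b) (hba : b ≤ a) (han : a ≤ Fintype.card V) :
    {B : Finset V | IsBlock G B ∧ B.card = a ∧ (gbnd G B).card = b}.ncard ≤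
      min (Fintype.card V * Nat.choose (a - 1) b)
        (Nat.choose (Fintype.card V) a) := by
  classical
  have hSeq : {B : Finset V | IsBlock G B ∧ B.card = a ∧ (gbnd G B).card = b} =
      ↑((univ : Finset (Finset V)).filter
        (fun B => IsBlock G B ∧ B.card = a ∧ (gbnd G B).card = b)) := by
    ext B; simp
  rw [hSeq, Set.ncard_coe_finset]
  set 𝓣 : Finset (Finset V) := (univ : Finset (Finset V)).filter
    (fun B => IsBlock G B ∧ B.card = a ∧ (gbnd G B).card = b) with h𝓣
  have keyv : ∀ v : V, (𝓣.filter (fun B => v ∈ gcore G B)).card ≤ (a - 1).choose b := by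
    intro v
    set 𝓕 : Finset (Finset V) := 𝓣.filter (fun B => v ∈ gcore G B) with h𝓕
    have hmem : ∀ B ∈ 𝓕, IsBlock G B ∧ B.card = a ∧ (gbnd G B).card = b ∧ v ∈ gcore G B := by
      intro B hB
      rw [h𝓕, mem_filter, h𝓣, mem_filter] at hB
      exact ⟨hB.1.2.1, hB.1.2.2.1, hB.1.2.2.2, hB.2⟩
    rcases 𝓕.eq_empty_or_nonempty with hemp | ⟨B₀, hB₀⟩
    · rw [hemp]; simp
    have hcore_card : ∀ B ∈ 𝓕, (gcore G B).card = a - b := by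
      intro B hB
      rw [BlkAux.gcore_card, (hmem B hB).2.1, (hmem B hB).2.2.1]
    have hblt : b < a := by
      have h1 : (gcore G B₀).card = a - b := hcore_card B₀ hB₀
      have h2 : v ∈ gcore G B₀ := (hmem B₀ hB₀).2.2.2
      have h3 : 0 < (gcore G B₀).card := card_pos.mpr ⟨v, h2⟩
      omega
    have hcross : ∀ B₁ ∈ 𝓕, ∀ B₂ ∈ 𝓕, B₁ ≠ B₂ →
        ((gbnd G B₁) ∩ (gcore G B₂ \ {v})).Nonempty := by
      intro B₁ hB₁ B₂ hB₂ hne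
      by_contra hni
      rw [not_nonempty_iff_eq_empty] at hni
      have hvnb : v ∉ gbnd G B₁ := by
        have := (hmem B₁ hB₁).2.2.2
        rw [gcore, mem_sdiff] at this
        exact this.2
      have hdisj : gbnd G B₁ ∩ gcore G B₂ = ∅ := by
        rw [eq_empty_iff_forall_notMem]
        intro x hx
        rw [mem_inter] at hx
        rcases eq_or_ne x v with rfl | hxv
        · exact hvnb hx.1
        · have : x ∈ gbnd G B₁ ∩ (gcore G B₂ \ {v}) := by
            rw [mem_inter, mem_sdiff, mem_singleton]
            exact ⟨hx.1, hx.2, hxv⟩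
          rw [hni] at this
          exact absurd this (notMem_empty x)
      have hsub : gcore G B₂ ⊆ gcore G B₁ :=
        BlkAux.gcore_subset_gcore G ((hmem B₂ hB₂).1.2.1)
          (hmem B₁ hB₁).2.2.2 (hmem B₂ hB₂).2.2.2 hdisj
      have hceq : gcore G B₂ = gcore G B₁ :=
        eq_of_subset_of_card_le hsub
          (by rw [hcore_card B₁ hB₁, hcore_card B₂ hB₂])
      have hBeq : B₁ = B₂ := by
        rw [(hmem B₁ hB₁).1.2.2, (hmem B₂ hB₂).1.2.2, hceq]
      exact hne hBeq
    have key := BlkAux.bollobas 𝓕 (fun B => gbnd G B) (fun B => gcore G B \ {v})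
      b (a - 1 - b)
      (fun B hB => (hmem B hB).2.2.1)
      (fun B hB => by
        rw [card_sdiff_of_subset (singleton_subset_iff.mpr (hmem B hB).2.2.2),
          hcore_card B hB, card_singleton]
        omega)
      (fun B hB => by
        have h1 : Disjoint (gbnd G B) (gcore G B) := by
          rw [gcore]
          exact Finset.sdiff_disjoint.symm
        exact h1.mono_right sdiff_subset)
      hcross
    have harith : b + (a - 1 - b) = a - 1 := by omega
    rwa [harith] at key
  refine le_min ?_ ?_
  · have cover : 𝓣 ⊆ univ.biUnion (fun v : V => 𝓣.filter (fun B => v ∈ gcore G B)) := by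
      intro B hB
      rw [mem_biUnion]
      obtain ⟨v, hv⟩ := ((mem_filter.mp hB).2.1).1
      exact ⟨v, mem_univ v, mem_filter.mpr ⟨hB, hv⟩⟩
    calc 𝓣.card ≤ (univ.biUnion fun v : V => 𝓣.filter (fun B => v ∈ gcore G B)).card :=
          card_le_card cover
      _ ≤ ∑ v ∈ univ, (𝓣.filter (fun B => v ∈ gcore G B)).card := card_biUnion_le
      _ ≤ ∑ _v ∈ (univ : Finset V), (a - 1).choose b := sum_le_sum (fun v _ => keyv v)
      _ = Fintype.card V * (a - 1).choose b := by
          rw [sum_const, smul_eq_mul, card_univ]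
  · calc 𝓣.card ≤ (powersetCard a (univ : Finset V)).card :=
          card_le_card (fun B hB => by
            rw [mem_powersetCard_univ]
            exact (mem_filter.mp hB).2.2.1)
      _ = (Fintype.card V).choose a := by rw [card_powersetCard, card_univ]
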